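/- Let p be a prime, q a positive integer divisible by p, and l an integer. Define G̃ : ℂ → ℂ by G̃(s) := Σ_{(a,b)} e(a·l/q) · expZeta(b·p/q, s), the sum running over all pairs (a,b) with 1 ≤ a,b ≤ q and a·b ≡ 1 (mod q), where b·p/q is taken in ℝ/ℤ. For each integer n ≥ 1 and each sign ±, set f_±(n) := Σ_{b} e(l·b̄/q), the sum over all b ∈ {1,…,q} with gcd(b,q) = 1 and b ≡ ±n (mod q/p), where b̄ ∈ {1,…,q} is the inverse of b modulo q. Then for every z ∈ ℂ with Re z < 0 one has G̃(z) = Γ(1−z) · (2πp/q)^{z−1} · [ e((1−z)/4) · Σ_{n=1}^∞ f_+(n) · n^{z−1} + e(−(1−z)/4) · Σ_{n=1}^∞ f_−(n) · n^{z−1} ], both series on the right converging absolutely. -/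

import Mathlib

open Complex

/-- `e(z) = exp(2πiz)`. -/
noncomputable def eC (z : ℂ) : ℂ := Complex.exp (2 * Real.pi * Complex.I * z)

/-- The Kloosterman sum `Kl(m,n;c) = Σ_{x mod c, (x,c)=1} e((mx + nx*)/c)`,
where `x*` is the inverse of `x` modulo `c`. -/
noncomputable def Kl (m n : ℤ) (c : ℕ) : ℂ :=
  ∑ x ∈ Finset.filter (fun x => Nat.gcd x c = 1) (Finset.Icc 1 c),
    eC ((((m * x + n * ((((x : ZMod c))⁻¹.val : ℕ) : ℤ) : ℤ) : ℝ) / c : ℝ))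

/-- `G̃(s) = Σ_{1 ≤ a,b ≤ q, ab ≡ 1 (q)} e(al/q) expZeta(bp/q, s)`. -/
noncomputable def Gt (p q : ℕ) (l : ℤ) (s : ℂ) : ℂ :=
  ∑ a ∈ Finset.Icc 1 q, ∑ b ∈ Finset.Icc 1 q,
    if (a * b) % q = 1 % q then
      eC ((((a : ℤ) * l : ℤ) : ℝ) / q) *
        HurwitzZeta.expZeta ((((b * p : ℕ) : ℝ) / q : ℝ) : UnitAddCircle) s
    else 0

/-- `f_ε(n) = Σ_{1 ≤ b ≤ q, (b,q)=1, b ≡ εn mod q/p} e(l b̄ / q)`,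
where `b̄` is the inverse of `b` modulo `q`. -/
noncomputable def fpm (p q : ℕ) (l ε : ℤ) (n : ℕ) : ℂ :=
  ∑ b ∈ Finset.filter
      (fun b => Nat.gcd b q = 1 ∧ (b : ℤ) % ((q / p : ℕ) : ℤ) = (ε * n) % ((q / p : ℕ) : ℤ))
      (Finset.Icc 1 q),
    eC (((l * ((((b : ZMod q))⁻¹.val : ℕ) : ℤ) : ℤ) : ℝ) / q)

open HurwitzZeta

lemma eC_add (x y : ℂ) : eC (x + y) = eC x * eC y := by
  rw [eC, eC, eC, ← Complex.exp_add]; ring_nf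

lemma eC_int (n : ℤ) : eC (n : ℂ) = 1 := by
  rw [eC, show 2 * (Real.pi:ℂ) * Complex.I * n = n * (2 * Real.pi * Complex.I) by ring,
    Complex.exp_int_mul_two_pi_mul_I]

lemma norm_eC_real (x : ℝ) : ‖eC (x:ℝ)‖ = 1 := by
  rw [eC, Complex.norm_exp]
  have : (2 * (Real.pi:ℂ) * Complex.I * (x:ℝ)).re = 0 := by simp
  rw [this, Real.exp_zero]

lemma eC_div_congr {q : ℕ} (hq : 0 < q) {m k : ℤ} (h : (q:ℤ) ∣ (m - k)) :
    eC ((m:ℝ)/q) = eC ((k:ℝ)/q) := by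
  obtain ⟨t, ht⟩ := h
  have hq' : (q:ℝ) ≠ 0 := Nat.cast_ne_zero.mpr hq.ne'
  have hm : m = k + q * t := by linarith [ht]
  have hq'' : (q:ℂ) ≠ 0 := Nat.cast_ne_zero.mpr hq.ne'
  have h2 : (((m:ℝ)):ℂ)/((q:ℕ):ℂ) = (((k:ℝ)):ℂ)/((q:ℕ):ℂ) + ((t:ℤ):ℂ) := by
    push_cast [hm]; field_simp
  rw [h2, eC_add, eC_int, mul_one]


lemma neg_pt {c : ℕ} (hc : 0 < c) (b : ℕ) :
    -((((b:ℝ)/c : ℝ)) : UnitAddCircle) = ((((c - b % c : ℕ):ℝ)/c : ℝ) : UnitAddCircle) := by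
  have hc' : (c:ℝ) ≠ 0 := Nat.cast_ne_zero.mpr hc.ne'
  apply neg_eq_of_add_eq_zero_left
  have h1 : ((((c - b % c : ℕ):ℝ)/c : ℝ) : UnitAddCircle) + (((b:ℝ)/c : ℝ) : UnitAddCircle)
      = ((((c - b % c : ℕ):ℝ)/c + (b:ℝ)/c : ℝ) : UnitAddCircle) := rfl
  rw [h1]
  refine AddCircle.coe_eq_zero_iff _ |>.mpr ⟨1 + ((b/c : ℕ):ℤ), ?_⟩
  rw [zsmul_eq_mul, mul_one]
  have hle : (b % c) ≤ c := (Nat.mod_lt _ hc).le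
  have hcast : ((c - b % c : ℕ):ℝ) = (c:ℝ) - ((b % c : ℕ):ℝ) := by
    push_cast [hle]; ring
  have hb : (b:ℝ) = c * ((b/c:ℕ):ℝ) + ((b%c:ℕ):ℝ) := by
    exact_mod_cast congrArg (Nat.cast : ℕ → ℝ) (Nat.div_add_mod b c).symm
  rw [Int.cast_add, Int.cast_one, Int.cast_natCast, hcast, ← add_div, hb]
  field_simp
  ring

lemma modcast1 (c b m : ℕ) :
    ((m+1) % c = b % c) ↔ ((b:ℤ) % (c:ℤ) = (1 * ((m+1:ℕ):ℤ)) % (c:ℤ)) := by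
  rw [one_mul]
  constructor
  · intro h
    have h1 := congrArg (Nat.cast : ℕ → ℤ) h
    push_cast [Int.natCast_mod] at h1
    exact h1.symm
  · intro h
    have h1 : (((m+1)%c : ℕ):ℤ) = ((b%c : ℕ):ℤ) := by
      push_cast [Int.natCast_mod]
      exact h.symm
    exact_mod_cast h1

lemma modcast2 {c : ℕ} (hc : 0 < c) (b m : ℕ) :
    ((m+1) % c = (c - b % c) % c) ↔ ((b:ℤ) % (c:ℤ) = ((-1) * ((m+1:ℕ):ℤ)) % (c:ℤ)) := by
  rw [neg_one_mul]
  have hle : (b % c) ≤ c := (Nat.mod_lt _ hc).le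
  have hcast : (((c - b % c : ℕ)):ℤ) = (c:ℤ) - (b:ℤ) % (c:ℤ) := by
    push_cast [hle, Int.natCast_mod]; ring
  have e1 : ((c:ℤ) - (b:ℤ)%c) % c = (-(b:ℤ)) % c := by
    rw [Int.sub_emod, Int.emod_self, Int.emod_emod_of_dvd b dvd_rfl, zero_sub]
    exact Int.ModEq.neg (Int.emod_emod_of_dvd b dvd_rfl)
  constructor
  · intro h
    have h1 : ((m+1:ℕ):ℤ) % c = ((c - b%c : ℕ):ℤ) % c := by
      have := congrArg (Nat.cast : ℕ → ℤ) h
      push_cast [Int.natCast_mod] at this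
      exact this
    rw [hcast, e1] at h1
    -- h1 : (m+1) ≡ -b [ZMOD c]
    have h2 := Int.ModEq.neg (n := c) h1
    rw [neg_neg] at h2
    exact h2.symm
  · intro h
    have h2 := Int.ModEq.neg (n := c) h
    rw [neg_neg] at h2
    -- h2 : -(b) ≡ m+1 ... careful: h : b ≡ -(m+1), neg: -b ≡ m+1
    have h3 : ((m+1:ℕ):ℤ) % c = ((c - b%c : ℕ):ℤ) % c := by
      rw [hcast, e1]
      exact h2.symm
    have h4 : (((m+1)%c : ℕ):ℤ) = (((c - b%c)%c : ℕ):ℤ) := by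
      push_cast [Int.natCast_mod]
      exact h3
    exact_mod_cast h4


lemma norm_eC_div (x : ℝ) (q : ℕ) : ‖eC (((x:ℝ):ℂ)/(q:ℕ))‖ = 1 := by
  rw [show ((x:ℝ):ℂ)/((q:ℕ):ℂ) = ((x/(q:ℝ) : ℝ):ℂ) by push_cast; ring]
  exact norm_eC_real _

lemma fpm_norm_le (p q : ℕ) (l ε : ℤ) (n : ℕ) : ‖fpm p q l ε n‖ ≤ q := by
  refine (norm_sum_le _ _).trans ?_
  have h1 : ∀ b ∈ Finset.filter
      (fun b => Nat.gcd b q = 1 ∧ (b : ℤ) % ((q / p : ℕ) : ℤ) = (ε * n) % ((q / p : ℕ) : ℤ))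
      (Finset.Icc 1 q), ‖eC (((l * ((((b : ZMod q))⁻¹.val : ℕ) : ℤ) : ℤ) : ℝ) / q)‖ = 1 :=
    fun b _ => norm_eC_div _ q
  rw [Finset.sum_congr rfl h1, Finset.sum_const, nsmul_eq_mul, mul_one]
  calc ((Finset.filter _ (Finset.Icc 1 q)).card : ℝ)
      ≤ ((Finset.Icc 1 q).card : ℝ) := by
        exact_mod_cast Finset.card_le_card (Finset.filter_subset _ _)
    _ = q := by rw [Nat.card_Icc]; simp

lemma summable_fpm (p q : ℕ) (l ε : ℤ) {z : ℂ} (hz : z.re < 0) :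
    Summable (fun n : ℕ => ‖fpm p q l ε (n+1) * (((n+1:ℕ)):ℂ)^(z-1)‖) := by
  have h1 : Summable (fun n : ℕ => (q:ℝ) * ((n+1:ℕ):ℝ)^(z.re-1)) := by
    apply Summable.mul_left
    have h2 := Real.summable_nat_rpow.mpr (show z.re - 1 < -1 by linarith)
    have h3 := (summable_nat_add_iff 1).mpr h2
    refine h3.congr fun n => ?_
    norm_num
  refine Summable.of_nonneg_of_le (fun n => norm_nonneg _) (fun n => ?_) h1
  rw [norm_mul]
  have hnorm : ‖(((n+1:ℕ)):ℂ)^(z-1)‖ = ((n+1:ℕ):ℝ)^(z.re-1) := by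
    rw [Complex.norm_natCast_cpow_of_pos (Nat.succ_pos n)]
    norm_num [Complex.sub_re]
  rw [hnorm]
  exact mul_le_mul_of_nonneg_right (fpm_norm_le p q l ε (n+1)) (Real.rpow_nonneg (by positivity) _)


lemma collapse (q : ℕ) (hq : 0 < q) (l : ℤ) (b : ℕ) (T : ℂ) :
    (∑ a ∈ Finset.Icc 1 q,
      if (a * b) % q = 1 % q then eC ((((a : ℤ) * l : ℤ) : ℝ) / q) * T else 0)
    = if Nat.gcd b q = 1 then
        eC (((l * ((((b : ZMod q))⁻¹.val : ℕ) : ℤ) : ℤ) : ℝ) / q) * T else 0 := by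
  haveI : NeZero q := ⟨hq.ne'⟩
  have hmod : ∀ a : ℕ, ((a*b) % q = 1 % q) ↔ ((a : ZMod q) * (b : ZMod q) = 1) := by
    intro a
    rw [← ZMod.natCast_eq_natCast_iff' (a*b) 1 q]
    push_cast
    rfl
  by_cases hg : Nat.gcd b q = 1
  · rw [if_pos hg]
    have hunit : IsUnit ((b:ℕ) : ZMod q) := (ZMod.isUnit_iff_coprime b q).mpr hg
    set u := ((b : ZMod q))⁻¹ with hu
    set a₀ := if u.val = 0 then q else u.val with ha₀
    have hval : u.val < q := ZMod.val_lt u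
    have ha₀m : a₀ ∈ Finset.Icc 1 q := by
      rw [Finset.mem_Icc, ha₀]
      split_ifs with h0
      · omega
      · omega
    have hcast : ((a₀ : ℕ) : ZMod q) = u := by
      rw [ha₀]
      split_ifs with h0
      · rw [ZMod.natCast_self]
        exact ((ZMod.val_eq_zero u).mp h0).symm
      · rw [ZMod.natCast_val, ZMod.cast_id]
    have hcond : (a₀ * b) % q = 1 % q := by
      rw [hmod, hcast, hu]
      exact ZMod.inv_mul_of_unit _ hunit
    rw [Finset.sum_eq_single_of_mem a₀ ha₀m ?uniq]
    · rw [if_pos hcond]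
      congr 1
      apply eC_div_congr hq
      -- q ∣ a₀ * l - l * u.val
      have hdvd : (q:ℤ) ∣ ((a₀:ℤ) - (u.val:ℤ)) := by
        rw [ha₀]
        split_ifs with h0
        · rw [h0]; simp
        · simp
      obtain ⟨s, hs⟩ := hdvd
      exact ⟨l * s, by linear_combination l * hs⟩
    case uniq =>
      intro a ham hane
      rw [if_neg]
      intro hcond'
      apply hane
      rw [hmod] at hcond'
      have hau : ((a:ℕ) : ZMod q) = u := by
        calc (a : ZMod q) = (a : ZMod q) * ((b : ZMod q) * u) := by
              rw [hu, ZMod.mul_inv_of_unit _ hunit, mul_one]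
          _ = ((a : ZMod q) * (b : ZMod q)) * u := by ring
          _ = u := by rw [hcond', one_mul]
      have hmod2 : a % q = u.val % q := by
        rw [← ZMod.natCast_eq_natCast_iff' a u.val q, hau, ZMod.natCast_val, ZMod.cast_id]
      rw [Nat.mod_eq_of_lt hval] at hmod2
      rw [Finset.mem_Icc] at ham
      rcases eq_or_lt_of_le ham.2 with h|h
      · subst h
        rw [Nat.mod_self] at hmod2
        rw [ha₀, if_pos hmod2.symm]
      · rw [Nat.mod_eq_of_lt h] at hmod2
        have h0 : u.val ≠ 0 := by omega
        rw [ha₀, if_neg h0]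
        exact hmod2
  · rw [if_neg hg]
    apply Finset.sum_eq_zero
    intro a _
    rw [if_neg]
    intro hcond
    apply hg
    rw [hmod] at hcond
    have : IsUnit ((b:ℕ) : ZMod q) :=
      IsUnit.of_mul_eq_one _ (by rw [mul_comm]; exact hcond)
    exact (ZMod.isUnit_iff_coprime b q).mp this


lemma pt_mod {c : ℕ} (hc : 0 < c) (b : ℕ) :
    (((b:ℝ)/c : ℝ) : UnitAddCircle) = ((((b % c : ℕ):ℝ)/c : ℝ) : UnitAddCircle) := by
  have hc' : (c:ℝ) ≠ 0 := Nat.cast_ne_zero.mpr hc.ne'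
  have h3 : ((b:ℝ))/c = ((b % c : ℕ):ℝ)/c + ((b / c : ℕ):ℝ) := by
    rw [div_add' _ _ _ hc', div_eq_div_iff hc' hc']
    have : (b:ℝ) = c * ((b/c : ℕ):ℝ) + ((b % c : ℕ):ℝ) := by
      exact_mod_cast congrArg (Nat.cast : ℕ → ℝ) (Nat.div_add_mod b c).symm
    rw [this]; ring
  rw [h3]
  have h4 : ((((b % c : ℕ):ℝ)/c + ((b / c : ℕ):ℝ) : ℝ) : UnitAddCircle)
      = ((((b % c : ℕ):ℝ)/c : ℝ) : UnitAddCircle) + ((((b / c : ℕ):ℝ)) : UnitAddCircle) := rfl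
  rw [h4, show ((((b / c : ℕ):ℝ)) : UnitAddCircle) = 0 from
    AddCircle.coe_eq_zero_iff _ |>.mpr ⟨((b / c : ℕ) : ℤ), by rw [zsmul_eq_mul, mul_one]; norm_cast⟩, add_zero]

lemma key_hasSum {c : ℕ} (hc : 0 < c) (b : ℕ) {z : ℂ} (hz : z.re < 0) :
    HasSum (fun m : ℕ => if (m+1) % c = b % c then ((m+1 : ℕ) : ℂ) ^ (z-1) else 0)
      ((c:ℂ)^(z-1) * hurwitzZeta (((b:ℝ)/c : ℝ) : UnitAddCircle) (1-z)) := by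
  have hs : 1 < (1-z).re := by simp [Complex.sub_re]; linarith
  have hz1 : z - 1 ≠ 0 := by
    intro h
    have := congrArg Complex.re h
    simp [Complex.sub_re] at this
    linarith
  set r := b % c with hr
  have hrc : r < c := Nat.mod_lt _ hc
  have hc' : (c:ℝ) ≠ 0 := Nat.cast_ne_zero.mpr hc.ne'
  have hc0 : (0:ℝ) < c := by positivity
  have ha : (r:ℝ)/c ∈ Set.Icc (0:ℝ) 1 := by
    constructor
    · positivity
    · rw [div_le_one hc0]; exact_mod_cast hrc.le
  have H := (hasSum_hurwitzZeta_of_one_lt_re ha hs).mul_left ((c:ℂ)^(z-1))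
  rw [pt_mod hc b]
  set S := (c:ℂ)^(z-1) * hurwitzZeta (((r:ℝ)/c : ℝ) : UnitAddCircle) (1-z) with hS
  have hterm : ∀ (n N : ℕ) (x : ℝ), ((N:ℝ) = ((n:ℝ) + x) * c) →
      (c:ℂ)^(z-1) * (1/(((n:ℂ) + (x:ℝ)))^(1-z)) = ((N:ℕ):ℂ)^(z-1) := by
    intro n N x hN
    have h1 : ((n:ℂ) + (x:ℝ)) = (((n:ℝ) + x : ℝ) : ℂ) := by push_cast; ring
    have h2 : ((N:ℂ)) = ((((n:ℝ)+x) * c : ℝ) : ℂ) := by rw [← hN]; push_cast; ring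
    have hnx : (0:ℝ) ≤ (n:ℝ) + x := by
      by_contra hcon
      push_neg at hcon
      have h5 : (N:ℝ) < 0 := by rw [hN]; exact mul_neg_of_neg_of_pos hcon hc0
      exact absurd h5 (not_lt.mpr (Nat.cast_nonneg N))
    have hw : ∀ w : ℂ, w^(z-1) = 1/w^(1-z) := fun w => by
      rw [show z-1 = -(1-z) by ring, cpow_neg, one_div]
    rw [h2, Complex.ofReal_mul, mul_cpow_ofReal_nonneg hnx hc0.le, h1,
      Complex.ofReal_natCast, ← hw (((((n:ℝ)+x)):ℝ):ℂ)]
    ring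
  have H2 : HasSum (fun n : ℕ => ((n*c + r : ℕ):ℂ)^(z-1)) S := by
    refine H.congr_fun fun n => ?_
    exact (hterm n (n*c+r) ((r:ℝ)/c) (by push_cast; field_simp)).symm
  rcases Nat.eq_zero_or_pos r with hr0 | hr1
  · rw [hr0] at H2
    have H3 : HasSum (fun n : ℕ => (((n+1)*c + 0 : ℕ):ℂ)^(z-1)) S := by
      have h6 := (hasSum_nat_add_iff' (f := fun n : ℕ => ((n*c + 0 : ℕ):ℂ)^(z-1)) 1).mpr H2
      simpa [zero_cpow hz1] using h6
    have hψ : Function.Injective (fun n : ℕ => n*c + (c-1)) := by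
      intro x y hxy
      simp only at hxy
      exact Nat.eq_of_mul_eq_mul_right hc (by omega)
    refine (Function.Injective.hasSum_iff hψ ?_).mp (H3.congr_fun fun n => ?_)
    · intro m hm
      rw [if_neg]
      intro hcon
      apply hm
      rw [hr0] at hcon
      have hd := Nat.div_add_mod (m+1) c
      rw [hcon] at hd
      obtain ⟨k, hk⟩ : ∃ k, (m+1)/c = k + 1 := by
        refine ⟨(m+1)/c - 1, ?_⟩
        rcases Nat.eq_zero_or_pos ((m+1)/c) with h0 | h1
        · rw [h0] at hd; omega
        · omega
      rw [hk] at hd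
      refine ⟨k, ?_⟩
      show k * c + (c-1) = m
      rw [Nat.mul_comm]
      have hd2 : c * (k+1) = c * k + c := by ring
      omega
    · show (if ((n*c + (c-1)) + 1) % c = r then (((n*c + (c-1)) + 1 : ℕ):ℂ)^(z-1) else 0)
          = (((n+1)*c + 0 : ℕ):ℂ)^(z-1)
      have h8 : n*c + (c-1) + 1 = (n+1)*c := by
        have h7 : (n+1)*c = n*c + c := by ring
        omega
      rw [h8, if_pos (by rw [hr0, Nat.mul_mod_left])]
      norm_num
  · have hψ : Function.Injective (fun n : ℕ => n*c + (r-1)) := by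
      intro x y hxy
      simp only at hxy
      exact Nat.eq_of_mul_eq_mul_right hc (by omega)
    refine (Function.Injective.hasSum_iff hψ ?_).mp (H2.congr_fun fun n => ?_)
    · intro m hm
      rw [if_neg]
      intro hcon
      apply hm
      have hd := Nat.div_add_mod (m+1) c
      rw [hcon] at hd
      refine ⟨(m+1)/c, ?_⟩
      show ((m+1)/c) * c + (r-1) = m
      rw [Nat.mul_comm]
      omega
    · show (if ((n*c + (r-1)) + 1) % c = r then (((n*c + (r-1)) + 1 : ℕ):ℂ)^(z-1) else 0)
          = ((n*c + r : ℕ):ℂ)^(z-1)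
      have h9 : n*c + (r-1) + 1 = n*c + r := by omega
      rw [h9, if_pos (show (n*c+r)%c = r by
        rw [Nat.add_comm, Nat.add_mul_mod_self_right, Nat.mod_eq_of_lt hrc])]

theorem stmt8 (p q : ℕ) (hp : p.Prime) (hq : 0 < q) (hpq : p ∣ q) (l : ℤ)
    (z : ℂ) (hz : z.re < 0) :
    Summable (fun n : ℕ => ‖fpm p q l 1 (n + 1) * (((n : ℕ) + 1 : ℕ) : ℂ) ^ (z - 1)‖) ∧
    Summable (fun n : ℕ => ‖fpm p q l (-1) (n + 1) * (((n : ℕ) + 1 : ℕ) : ℂ) ^ (z - 1)‖) ∧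
    Gt p q l z = Complex.Gamma (1 - z) * (((2 * Real.pi * p / q : ℝ) : ℂ)) ^ (z - 1) *
      (eC ((1 - z) / 4) * ∑' n : ℕ, fpm p q l 1 (n + 1) * (((n : ℕ) + 1 : ℕ) : ℂ) ^ (z - 1) +
       eC (-(1 - z) / 4) *
        ∑' n : ℕ, fpm p q l (-1) (n + 1) * (((n : ℕ) + 1 : ℕ) : ℂ) ^ (z - 1)) := by
  obtain ⟨c, hcq⟩ := hpq
  have hp0 : 0 < p := hp.pos
  have hc0 : 0 < c := by
    rcases Nat.eq_zero_or_pos c with h|h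
    · subst h; rw [Nat.mul_zero] at hcq; omega
    · exact h
  have hqp : q / p = c := by rw [hcq, Nat.mul_div_cancel_left _ hp0]
  refine ⟨summable_fpm p q l 1 hz, summable_fpm p q l (-1) hz, ?_⟩
  have hq0 : (q:ℝ) ≠ 0 := Nat.cast_ne_zero.mpr hq.ne'
  have hcr : (c:ℝ) ≠ 0 := Nat.cast_ne_zero.mpr hc0.ne'
  have hpr : (p:ℝ) ≠ 0 := Nat.cast_ne_zero.mpr hp0.ne'
  -- Step 1 : collapse the `a`-sum
  have hGt1 : Gt p q l z = ∑ b ∈ (Finset.Icc 1 q).filter (fun b => Nat.gcd b q = 1),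
      eC (((l * ((((b : ZMod q))⁻¹.val : ℕ) : ℤ) : ℤ) : ℝ) / q) *
        HurwitzZeta.expZeta ((((b * p : ℕ) : ℝ) / q : ℝ) : UnitAddCircle) z := by
    unfold Gt
    rw [Finset.sum_comm, Finset.sum_filter]
    exact Finset.sum_congr rfl fun b _ => collapse q hq l b _
  -- Step 2 : functional equation
  have hfe : ∀ b : ℕ, HurwitzZeta.expZeta ((((b * p : ℕ) : ℝ) / q : ℝ) : UnitAddCircle) z
      = ((2 * (Real.pi:ℂ)) ^ (-(1-z)) * Complex.Gamma (1-z)) *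
        (Complex.exp ((Real.pi:ℂ) * Complex.I * (1-z) / 2) *
            hurwitzZeta (((b:ℝ)/c : ℝ) : UnitAddCircle) (1-z) +
         Complex.exp (-(Real.pi:ℂ) * Complex.I * (1-z) / 2) *
            hurwitzZeta ((((c - b % c : ℕ):ℝ)/c : ℝ) : UnitAddCircle) (1-z)) := by
    intro b
    have hpt : (((b * p : ℕ) : ℝ) / q : ℝ) = ((b:ℝ)/c : ℝ) := by
      rw [hcq]; push_cast
      rw [div_eq_div_iff (by positivity) (by positivity)]
      ring
    have hsne : ∀ n : ℕ, (1 - z) ≠ 1 - (n:ℂ) := by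
      intro n h
      have h2 := congrArg Complex.re h
      simp only [Complex.sub_re, Complex.one_re, Complex.natCast_re] at h2
      have : z.re = (n:ℝ) := by linarith
      have hn : (0:ℝ) ≤ (n:ℝ) := Nat.cast_nonneg n
      linarith
    have h1 := HurwitzZeta.expZeta_one_sub ((((b:ℝ)/c : ℝ)) : UnitAddCircle) hsne
    rw [show (1:ℂ) - (1-z) = z by ring] at h1
    rw [hpt, h1, neg_pt hc0 b]
  -- Step 3 : HasSum identities
  have HSp : HasSum (fun n : ℕ => fpm p q l 1 (n + 1) * (((n : ℕ) + 1 : ℕ) : ℂ) ^ (z - 1))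
      (∑ b ∈ (Finset.Icc 1 q).filter (fun b => Nat.gcd b q = 1),
        eC (((l * ((((b : ZMod q))⁻¹.val : ℕ) : ℤ) : ℤ) : ℝ) / q) *
          ((c:ℂ)^(z-1) * hurwitzZeta (((b:ℝ)/c : ℝ) : UnitAddCircle) (1-z))) := by
    have h1 : ∀ b ∈ (Finset.Icc 1 q).filter (fun b => Nat.gcd b q = 1),
        HasSum (fun m : ℕ => eC (((l * ((((b : ZMod q))⁻¹.val : ℕ) : ℤ) : ℤ) : ℝ) / q) *
            (if (m+1) % c = b % c then ((m+1 : ℕ) : ℂ) ^ (z-1) else 0))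
          (eC (((l * ((((b : ZMod q))⁻¹.val : ℕ) : ℤ) : ℤ) : ℝ) / q) *
            ((c:ℂ)^(z-1) * hurwitzZeta (((b:ℝ)/c : ℝ) : UnitAddCircle) (1-z))) :=
      fun b _ => (key_hasSum hc0 b hz).mul_left _
    refine HasSum.congr_fun (hasSum_sum h1) fun m => ?_
    unfold fpm
    simp only [mul_ite, mul_zero]
    rw [← Finset.sum_filter, Finset.filter_filter, Finset.sum_mul]
    refine Finset.sum_congr (Finset.filter_congr fun b _ => ?_) fun _ _ => rfl
    rw [hqp]
    exact and_congr_right fun _ => (modcast1 c b m).symm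
  have HSm : HasSum (fun n : ℕ => fpm p q l (-1) (n + 1) * (((n : ℕ) + 1 : ℕ) : ℂ) ^ (z - 1))
      (∑ b ∈ (Finset.Icc 1 q).filter (fun b => Nat.gcd b q = 1),
        eC (((l * ((((b : ZMod q))⁻¹.val : ℕ) : ℤ) : ℤ) : ℝ) / q) *
          ((c:ℂ)^(z-1) * hurwitzZeta ((((c - b % c : ℕ):ℝ)/c : ℝ) : UnitAddCircle) (1-z))) := by
    have h1 : ∀ b ∈ (Finset.Icc 1 q).filter (fun b => Nat.gcd b q = 1),
        HasSum (fun m : ℕ => eC (((l * ((((b : ZMod q))⁻¹.val : ℕ) : ℤ) : ℤ) : ℝ) / q) *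
            (if (m+1) % c = (c - b % c) % c then ((m+1 : ℕ) : ℂ) ^ (z-1) else 0))
          (eC (((l * ((((b : ZMod q))⁻¹.val : ℕ) : ℤ) : ℤ) : ℝ) / q) *
            ((c:ℂ)^(z-1) * hurwitzZeta ((((c - b % c : ℕ):ℝ)/c : ℝ) : UnitAddCircle) (1-z))) :=
      fun b _ => (key_hasSum hc0 (c - b % c) hz).mul_left _
    refine HasSum.congr_fun (hasSum_sum h1) fun m => ?_
    unfold fpm
    simp only [mul_ite, mul_zero]
    rw [← Finset.sum_filter, Finset.filter_filter, Finset.sum_mul]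
    refine Finset.sum_congr (Finset.filter_congr fun b _ => ?_) fun _ _ => rfl
    rw [hqp]
    exact and_congr_right fun _ => (modcast2 hc0 b m).symm
  -- Step 4 : put everything together
  rw [hGt1, HSp.tsum_eq, HSm.tsum_eq]
  have heCp : eC ((1-z)/4) = Complex.exp ((Real.pi:ℂ) * Complex.I * (1-z) / 2) := by
    rw [eC]; congr 1; ring
  have heCm : eC (-(1-z)/4) = Complex.exp (-(Real.pi:ℂ) * Complex.I * (1-z) / 2) := by
    rw [eC]; congr 1; ring
  rw [heCp, heCm]
  have hDc : (((2 * Real.pi * p / q : ℝ) : ℂ)) ^ (z - 1) * ((c:ℕ):ℂ)^(z-1)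
      = (2 * (Real.pi:ℂ)) ^ (-(1-z)) := by
    have hD : (2 * Real.pi * (p:ℝ) / q : ℝ) = 2 * Real.pi / c := by
      rw [hcq]; push_cast; field_simp
    rw [hD, show ((c:ℕ):ℂ) = (((c:ℕ):ℝ):ℂ) from (Complex.ofReal_natCast c).symm,
      ← mul_cpow_ofReal_nonneg (by positivity) (by positivity),
      show ((2 * Real.pi / c : ℝ):ℂ) * (((c:ℕ):ℝ):ℂ) = ((2 * Real.pi : ℝ):ℂ) by
        rw [← Complex.ofReal_mul]; congr 1; field_simp,
      show -(1-z) = z - 1 by ring]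
    norm_cast
  rw [Finset.sum_congr rfl (fun b _ => by rw [hfe b])]
  rw [Finset.mul_sum, Finset.mul_sum, ← Finset.sum_add_distrib, Finset.mul_sum]
  refine Finset.sum_congr rfl fun b _ => ?_
  set W := eC (((l * ((((b : ZMod q))⁻¹.val : ℕ) : ℤ) : ℤ) : ℝ) / q)
  set HP := hurwitzZeta (((b:ℝ)/c : ℝ) : UnitAddCircle) (1-z)
  set HM := hurwitzZeta ((((c - b % c : ℕ):ℝ)/c : ℝ) : UnitAddCircle) (1-z)
  set EP := Complex.exp ((Real.pi:ℂ) * Complex.I * (1-z) / 2)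
  set EM := Complex.exp (-(Real.pi:ℂ) * Complex.I * (1-z) / 2)
  linear_combination -Complex.Gamma (1-z) * (EP * (W * HP) + EM * (W * HM)) * hDc
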